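/- If the time-dependent mgf of the susceptibility distribution is M(t,λ) = M₀(λ + q(t))/M₀(q(t)) with M₀(λ) = (1 - λ/ν)^{-k} (gamma initial distribution), then the time-t distribution is again a gamma distribution with shape k and rate ν - q(t); in particular the time-t mean is k/(ν - q(t)), the time-t variance is k/(ν - q(t))², and the coefficient of variation σ(t)/mean(t) = 1/√k is constant in time. -/

import Mathlib

open Real

/-- If the initial susceptibility distribution is gamma with shape k and rate ν,
then the tilted (time-t) mgf M₀(λ+q)/M₀(q) is the gamma mgf with shape k and
rate ν - q; in particular the time-t mean is k/(ν-q), the variance k/(ν-q)²,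
and the coefficient of variation 1/√k is constant in time. -/
theorem gamma_stable_under_tilting
    (k ν q : ℝ) (hk : 0 < k) (hν : 0 < ν) (hq : q < ν)
    (M₀ Mt : ℝ → ℝ)
    (hM₀ : ∀ lam : ℝ, M₀ lam = (1 - lam / ν) ^ (-k))
    (hMt : ∀ lam : ℝ, Mt lam = M₀ (lam + q) / M₀ q) :
    (∀ lam : ℝ, lam < ν - q → Mt lam = (1 - lam / (ν - q)) ^ (-k)) ∧
      deriv (fun lam => Real.log (Mt lam)) 0 = k / (ν - q) ∧
      deriv (deriv (fun lam => Real.log (Mt lam))) 0 = k / (ν - q) ^ 2 ∧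
      Real.sqrt (k / (ν - q) ^ 2) / (k / (ν - q)) = 1 / Real.sqrt k := by
  have hc0 : 0 < ν - q := sub_pos.mpr hq
  set c := ν - q with hc
  -- Part 1
  have part1 : ∀ lam : ℝ, lam < c → Mt lam = (1 - lam / c) ^ (-k) := by
    intro lam hlam
    have h1 : (0:ℝ) < 1 - (lam + q)/ν := by
      rw [sub_pos, div_lt_one hν]; linarith
    have h2 : (0:ℝ) < 1 - q/ν := by
      rw [sub_pos, div_lt_one hν]; linarith
    rw [hMt, hM₀, hM₀, ← Real.div_rpow h1.le h2.le]
    congr 1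
    field_simp
    have hc' : (ν - q)⁻¹ * c = 1 := by rw [← hc]; exact inv_mul_cancel₀ hc0.ne'
    linear_combination (ν - lam - q) * hc' - hc
  refine ⟨part1, ?_⟩
  -- auxiliary function
  set g : ℝ → ℝ := fun x => k * Real.log c - k * Real.log (c - x) with hg
  have hfg : ∀ x, x < c → Real.log (Mt x) = g x := by
    intro x hx
    have hpos : (0:ℝ) < 1 - x / c := by
      rw [sub_pos, div_lt_one hc0]; exact hx
    rw [part1 x hx, Real.log_rpow hpos, hg]
    have : 1 - x / c = (c - x) / c := by field_simp
    rw [this, Real.log_div (by linarith) (by linarith)]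
    ring
  have hgderiv : ∀ x, x < c → HasDerivAt g (k / (c - x)) x := by
    intro x hx
    have hne : c - x ≠ 0 := by linarith
    have h1 : HasDerivAt (fun y : ℝ => c - y) (-1) x := (hasDerivAt_id x).const_sub c
    have hlog : HasDerivAt (fun y => Real.log (c - y)) ((c - x)⁻¹ * (-1)) x :=
      (Real.hasDerivAt_log hne).comp x h1
    have := (hasDerivAt_const x (k * Real.log c)).sub (hlog.const_mul k)
    have h' : HasDerivAt g (0 - k * ((c - x)⁻¹ * -1)) x := this
    exact h'.congr_deriv (by rw [div_eq_mul_inv]; ring)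
  have hderiv_eq : ∀ x, x < c → deriv (fun y => Real.log (Mt y)) x = k / (c - x) := by
    intro x hx
    have hEqx : (fun y => Real.log (Mt y)) =ᶠ[nhds x] g := by
      filter_upwards [Iio_mem_nhds hx] with y hy
      exact hfg y hy
    rw [hEqx.deriv_eq, (hgderiv x hx).deriv]
  constructor
  · rw [hderiv_eq 0 hc0]; norm_num
  constructor
  · have hEq2 : deriv (fun y => Real.log (Mt y)) =ᶠ[nhds (0:ℝ)] fun x => k / (c - x) := by
      filter_upwards [Iio_mem_nhds hc0] with x hx
      exact hderiv_eq x hx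
    rw [hEq2.deriv_eq]
    have h1 : HasDerivAt (fun y : ℝ => c - y) (-1) (0:ℝ) := (hasDerivAt_id 0).const_sub c
    have hne : c - (0:ℝ) ≠ 0 := by simpa using hc0.ne'
    have hp := (hasDerivAt_const (0:ℝ) k).div h1 hne
    have : deriv (fun x => k / (c - x)) 0 = (0 * (c - 0) - k * (-1)) / (c - 0) ^ 2 := hp.deriv
    rw [this]
    ring
  · have h1 : Real.sqrt (k / c ^ 2) = Real.sqrt k / c := by
      rw [Real.sqrt_div hk.le, Real.sqrt_sq hc0.le]
    rw [h1]
    rw [div_div_div_eq, div_eq_div_iff (by positivity) (by positivity)]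
    linear_combination c * Real.mul_self_sqrt hk.le
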